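/- Let g : [u⁻,u⁺] → ℝ be continuous and non-decreasing. Then the minimum of ∫_{u⁻}^{u⁺} |V(v) + g(v)|² dv over all non-decreasing functions V on [u⁻,u⁺] is attained at the constant function V(v) = −c, where c = (1/(u⁺−u⁻)) ∫_{u⁻}^{u⁺} g(v) dv is the mean of g. -/

import Mathlib

open MeasureTheory Set

/-- Chebyshev's integral inequality in the form we need: if `W` and `h` are monotone on
`Icc um up`, integrable, with integrable product, and `h` has zero integral, then the integral
of `W * h` over `Ioc um up` is nonnegative. -/
lemma cheb_aux (um up : ℝ) (hu : um < up) (W h : ℝ → ℝ)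
    (hWm : MonotoneOn W (Set.Icc um up)) (hhm : MonotoneOn h (Set.Icc um up))
    (hWint : Integrable W (volume.restrict (Set.Ioc um up)))
    (hhint : Integrable h (volume.restrict (Set.Ioc um up)))
    (hWh : Integrable (fun x => W x * h x) (volume.restrict (Set.Ioc um up)))
    (h0 : (∫ x in Set.Ioc um up, h x) = 0) :
    0 ≤ ∫ x in Set.Ioc um up, W x * h x := by
  set μ : Measure ℝ := volume.restrict (Set.Ioc um up) with hμ
  have hμuniv : (μ Set.univ).toReal = up - um := by
    rw [hμ, Measure.restrict_apply MeasurableSet.univ, Set.univ_inter, Real.volume_Ioc,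
      ENNReal.toReal_ofReal (by linarith)]
  set P : Measure (ℝ × ℝ) := μ.prod μ with hP
  set F : ℝ × ℝ → ℝ := fun z => (W z.1 - W z.2) * (h z.1 - h z.2) with hF
  have hPr : P = (volume.prod volume).restrict ((Set.Ioc um up) ×ˢ (Set.Ioc um up)) := by
    rw [hP, hμ, Measure.prod_restrict]
  have hFnonneg : ∀ᵐ z ∂P, 0 ≤ F z := by
    rw [hPr, ae_restrict_iff' (measurableSet_Ioc.prod measurableSet_Ioc)]
    refine Filter.Eventually.of_forall (fun z hz => ?_)
    obtain ⟨hz1, hz2⟩ := hz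
    simp only [hF]
    have h1 : z.1 ∈ Set.Icc um up := Set.Ioc_subset_Icc_self hz1
    have h2 : z.2 ∈ Set.Icc um up := Set.Ioc_subset_Icc_self hz2
    rcases le_total z.1 z.2 with hle | hle
    · nlinarith [hWm h1 h2 hle, hhm h1 h2 hle]
    · nlinarith [hWm h2 h1 hle, hhm h2 h1 hle]
  have hI1 : Integrable (fun z : ℝ × ℝ => (W z.1 * h z.1) * (1 : ℝ)) P :=
    hWh.mul_prod (integrable_const 1)
  have hI2 : Integrable (fun z : ℝ × ℝ => W z.1 * h z.2) P := hWint.mul_prod hhint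
  have hI3 : Integrable (fun z : ℝ × ℝ => h z.1 * W z.2) P := hhint.mul_prod hWint
  have hI4 : Integrable (fun z : ℝ × ℝ => (1 : ℝ) * (W z.2 * h z.2)) P :=
    (integrable_const 1).mul_prod hWh
  have hI12 : Integrable (fun z : ℝ × ℝ => (W z.1 * h z.1) * (1 : ℝ) - W z.1 * h z.2) P :=
    hI1.sub hI2
  have hI123 : Integrable
      (fun z : ℝ × ℝ => (W z.1 * h z.1) * (1 : ℝ) - W z.1 * h z.2 - h z.1 * W z.2) P :=
    hI12.sub hI3
  have key : ∫ z, F z ∂P =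
      (∫ z : ℝ × ℝ, (W z.1 * h z.1) * (1 : ℝ) ∂P) - (∫ z : ℝ × ℝ, W z.1 * h z.2 ∂P)
      - (∫ z : ℝ × ℝ, h z.1 * W z.2 ∂P) + (∫ z : ℝ × ℝ, (1 : ℝ) * (W z.2 * h z.2) ∂P) := by
    rw [← integral_sub hI1 hI2, ← integral_sub hI12 hI3, ← integral_add hI123 hI4]
    refine integral_congr_ae (Filter.Eventually.of_forall fun z => ?_)
    simp only [hF]; ring
  have e0 : (∫ _x, (1 : ℝ) ∂μ) = up - um := by
    rw [integral_const, measureReal_def, hμuniv, smul_eq_mul, mul_one]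
  rw [integral_prod_mul, integral_prod_mul] at key
  have t1 : (∫ z : ℝ × ℝ, (W z.1 * h z.1) * (1 : ℝ) ∂P) = (∫ x, W x * h x ∂μ) * (up - um) := by
    have := integral_prod_mul (μ := μ) (ν := μ) (fun x => W x * h x) (fun _ => (1 : ℝ))
    simpa [e0] using this
  have t4 : (∫ z : ℝ × ℝ, (1 : ℝ) * (W z.2 * h z.2) ∂P) = (up - um) * ∫ x, W x * h x ∂μ := by
    have := integral_prod_mul (μ := μ) (ν := μ) (fun _ => (1 : ℝ)) (fun x => W x * h x)
    simpa [e0] using this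
  have h0' : (∫ x, h x ∂μ) = 0 := h0
  rw [t1, t4, h0'] at key
  have hFpos : 0 ≤ ∫ z, F z ∂P := integral_nonneg_of_ae hFnonneg
  rw [key] at hFpos
  have hIwh : 0 ≤ 2 * (up - um) * ∫ x, W x * h x ∂μ := by nlinarith
  nlinarith

theorem best_monotone_approx_is_neg_mean
    (um up : ℝ) (hu : um < up) (g : ℝ → ℝ)
    (hgc : ContinuousOn g (Set.Icc um up)) (hgm : MonotoneOn g (Set.Icc um up))
    (c : ℝ) (hc : c = (1 / (up - um)) * ∫ v in um..up, g v) :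
    ∀ V : ℝ → ℝ, MonotoneOn V (Set.Icc um up) →
      (∫ v in um..up, (-c + g v) ^ 2) ≤ ∫ v in um..up, (V v + g v) ^ 2 := by
  intro V hV
  have hle : um ≤ up := le_of_lt hu
  have huIcc : Set.uIcc um up = Set.Icc um up := Set.uIcc_of_le hle
  set μ : Measure ℝ := volume.restrict (Set.Ioc um up) with hμ
  set W : ℝ → ℝ := fun v => V v + c with hW
  set h : ℝ → ℝ := fun v => g v - c with hh
  have hWm : MonotoneOn W (Set.Icc um up) := fun a ha b hb hab => by
    simpa [hW] using add_le_add_right (hV ha hb hab) c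
  have hhm : MonotoneOn h (Set.Icc um up) := fun a ha b hb hab => by
    simpa [hh] using sub_le_sub_right (hgm ha hb hab) c
  have hWint : Integrable W μ := by
    have := (MonotoneOn.intervalIntegrable (μ := volume) (u := W) (a := um) (b := up) (by rwa [huIcc]))
    rwa [intervalIntegrable_iff_integrableOn_Ioc_of_le hle] at this
  have hhcont : ContinuousOn h (Set.Icc um up) := hgc.sub continuousOn_const
  have hhint : Integrable h μ := by
    have : IntervalIntegrable h volume um up :=
      ContinuousOn.intervalIntegrable_of_Icc hle hhcont
    rwa [intervalIntegrable_iff_integrableOn_Ioc_of_le hle] at this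
  have hWbdd : ∀ᵐ x ∂μ, ‖W x‖ ≤ max ‖W um‖ ‖W up‖ := by
    rw [hμ, ae_restrict_iff' measurableSet_Ioc]
    refine Filter.Eventually.of_forall (fun x hx => ?_)
    have hx' : x ∈ Set.Icc um up := Set.Ioc_subset_Icc_self hx
    have h1 : W um ≤ W x := hWm (Set.left_mem_Icc.2 hle) hx' hx'.1
    have h2 : W x ≤ W up := hWm hx' (Set.right_mem_Icc.2 hle) hx'.2
    rw [Real.norm_eq_abs, abs_le]
    constructor
    · calc -(max ‖W um‖ ‖W up‖) ≤ -‖W um‖ := neg_le_neg (le_max_left _ _)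
          _ ≤ W um := neg_abs_le _
          _ ≤ W x := h1
    · calc W x ≤ W up := h2
          _ ≤ ‖W up‖ := le_abs_self _
          _ ≤ max ‖W um‖ ‖W up‖ := le_max_right _ _
  have hWsq : Integrable (fun x => W x * W x) μ :=
    hWint.bdd_mul hWint.aestronglyMeasurable hWbdd
  have hWh : Integrable (fun x => W x * h x) μ :=
    hhint.bdd_mul hWint.aestronglyMeasurable hWbdd
  have hhsq : Integrable (fun x => h x * h x) μ := by
    have : IntervalIntegrable (fun x => h x * h x) volume um up :=
      ContinuousOn.intervalIntegrable_of_Icc hle (hhcont.mul hhcont)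
    rwa [intervalIntegrable_iff_integrableOn_Ioc_of_le hle] at this
  have hL : up - um ≠ 0 := by linarith
  have hgint_eq : (∫ v in um..up, g v) = ∫ x in Set.Ioc um up, g x :=
    intervalIntegral.integral_of_le hle
  have h0 : (∫ x in Set.Ioc um up, h x) = 0 := by
    have hgint : Integrable g μ := by
      have : IntervalIntegrable g volume um up :=
        ContinuousOn.intervalIntegrable_of_Icc hle hgc
      rwa [intervalIntegrable_iff_integrableOn_Ioc_of_le hle] at this
    have heq : (∫ x in Set.Ioc um up, h x) = (∫ x in Set.Ioc um up, g x) - (up - um) * c := by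
      rw [show h = fun x => g x - c from rfl]
      rw [integral_sub hgint (integrable_const c), integral_const, measureReal_def,
        Measure.restrict_apply MeasurableSet.univ, Set.univ_inter, Real.volume_Ioc,
        ENNReal.toReal_ofReal (by linarith), smul_eq_mul]
    rw [heq, ← hgint_eq, hc]
    field_simp
    ring
  have hcheb : 0 ≤ ∫ x in Set.Ioc um up, W x * h x :=
    cheb_aux um up hu W h hWm hhm hWint hhint hWh h0
  rw [intervalIntegral.integral_of_le hle, intervalIntegral.integral_of_le hle]
  have heq1 : ∀ x, (V x + g x) ^ 2 = W x * W x + 2 * (W x * h x) + h x * h x := by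
    intro x; simp only [hW, hh]; ring
  have heq2 : ∀ x, (-c + g x) ^ 2 = h x * h x := by
    intro x; simp only [hh]; ring
  simp_rw [heq1, heq2]
  have h2Wh : Integrable (fun x => 2 * (W x * h x)) μ := hWh.const_mul 2
  have hA : Integrable (fun x => W x * W x + 2 * (W x * h x)) μ := hWsq.add h2Wh
  have expand : (∫ x in Set.Ioc um up, (W x * W x + 2 * (W x * h x)) + h x * h x)
      = ((∫ x in Set.Ioc um up, W x * W x) + 2 * ∫ x in Set.Ioc um up, W x * h x)
        + ∫ x in Set.Ioc um up, h x * h x := by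
    rw [integral_add hA hhsq, integral_add hWsq h2Wh, integral_const_mul 2 _]
  rw [show (fun x => W x * W x + 2 * (W x * h x) + h x * h x)
      = fun x => (W x * W x + 2 * (W x * h x)) + h x * h x from rfl] at *
  rw [expand]
  have hWsqpos : 0 ≤ ∫ x in Set.Ioc um up, W x * W x :=
    integral_nonneg (fun x => mul_self_nonneg _)
  linarith
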